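/- Let v be a valuation and let G be a set of atomic constraints such that for every future clock x ∈ X_F both x - 0 ≤ 0 and 0 - x ≤ 0 are in G. Then ↑_G v = ⟦𝔾_v^G⟧ ∩ {v' valuation : v' ⊨ g_v^G}, where ↑_G v := {v' valuation : v ≼_G v'}. -/

import Mathlib

noncomputable section

open Classical

attribute [local instance] Classical.propDecidable

namespace GTA

/-- A comparison operator: strict `<` or non-strict `≤`. -/
inductive Cmp where
  | lt : Cmp
  | le : Cmp
deriving DecidableEq

/-- `Cmp.holds ◁ a b` means `a ◁ b` in `ℝ̄ = EReal`. -/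
def Cmp.holds : Cmp → EReal → EReal → Prop
  | .lt, a, b => a < b
  | .le, a, b => a ≤ b

/-- Extended addition on `ℝ̄`: `(+∞) + α = α + (+∞) = +∞` for all `α`,
and `(-∞) + β = β + (-∞) = -∞` for `β ≠ +∞`. -/
def eadd (a b : EReal) : EReal := if a = ⊤ ∨ b = ⊤ then ⊤ else a + b

/-- Extended subtraction `β - α := β + (-α)`. -/
def esub (a b : EReal) : EReal := eadd a (-b)

/-- Constants of atomic constraints: elements of `ℤ ∪ {-∞, +∞}`. -/
inductive EConst where
  | ninf : EConst
  | int : ℤ → EConst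
  | pinf : EConst
deriving DecidableEq

def EConst.toEReal : EConst → EReal
  | .ninf => ⊥
  | .int k => ((k : ℝ) : EReal)
  | .pinf => ⊤

variable {C : Type*}

/-- A valuation over the clock set `C` (vertices `Option C`, where `none` is the
special clock `0`), with future clocks `XF` and history clocks the complement of `XF`:
`v 0 = 0`, history clocks take values in `[0, +∞]`, future clocks in `[-∞, 0]`. -/
structure Val (C : Type*) (XF : Set C) where
  toFun : Option C → EReal
  zero' : toFun none = 0
  hist' : ∀ x : C, x ∉ XF → 0 ≤ toFun (some x)
  fut' : ∀ x : C, x ∈ XF → toFun (some x) ≤ 0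

/-- Shift of a clock map by a real delay `δ`: every clock in `X` increases by `δ`,
the special clock `0` keeps value `0`. -/
def shift (u : Option C → EReal) (δ : ℝ) : Option C → EReal
  | none => 0
  | some x => eadd (u (some x)) ((δ : ℝ) : EReal)

/-- An atomic constraint `y - x ◁ c` with `x, y ∈ X ∪ {0}` and `c ∈ ℤ ∪ {-∞,+∞}`. -/
structure Atom (C : Type*) where
  y : Option C
  x : Option C
  cmp : Cmp
  c : EConst

/-- Satisfaction `u ⊨ y - x ◁ c`, i.e. `u(y) - u(x) ◁ c` with extended subtraction. -/
def asat (u : Option C → EReal) (φ : Atom C) : Prop :=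
  φ.cmp.holds (esub (u φ.y) (u φ.x)) φ.c.toEReal

/-- The simulation preorder `≼_G` on clock maps: for every `φ ∈ G` and every real
`δ ≥ 0`, `u + δ ⊨ φ` implies `u' + δ ⊨ φ`. -/
def simLeFun (G : Set (Atom C)) (u u' : Option C → EReal) : Prop :=
  ∀ φ ∈ G, ∀ δ : ℝ, 0 ≤ δ → asat (shift u δ) φ → asat (shift u' δ) φ

/-- `v ≼_G v'` on valuations. -/
def simLe (XF : Set C) (G : Set (Atom C)) (v v' : Val C XF) : Prop :=
  simLeFun G v.toFun v'.toFun

/-- `v' ∈ [R]v`: history clocks in `R` are reset to `0`, future clocks in `R` are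
released (any value in `[-∞,0]`, automatic for valuations), other clocks unchanged. -/
def releaseRel (XF : Set C) (R : Set C) (v v' : Val C XF) : Prop :=
  (∀ x ∈ R, x ∉ XF → v'.toFun (some x) = 0) ∧
  ∀ x : C, x ∉ R → v'.toFun (some x) = v.toFun (some x)

/-- `[R]Z`. -/
def changeSet (XF : Set C) (R : Set C) (Z : Set (Val C XF)) : Set (Val C XF) :=
  { v' | ∃ v ∈ Z, releaseRel XF R v v' }

/-- Time elapse `↑Z = {v + δ : v ∈ Z, δ ≥ 0, (v+δ)(x) ≤ 0 for all future x}`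
(the latter condition is automatic since elements are valuations). -/
def elapseSet (XF : Set C) (Z : Set (Val C XF)) : Set (Val C XF) :=
  { w | ∃ v ∈ Z, ∃ δ : ℝ, 0 ≤ δ ∧ w.toFun = shift v.toFun δ }

/-- Membership of a vertex in a set of clocks (the clock `0` is in no such set). -/
def inR (R : Set C) : Option C → Prop
  | none => False
  | some x => x ∈ R

/-- `pre([R])(G)`. -/
def preChange (R : Set C) (G : Set (Atom C)) : Set (Atom C) :=
  { ψ | ∃ φ ∈ G,
      (¬ inR R φ.x ∧ ¬ inR R φ.y ∧ ψ = φ) ∨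
      (inR R φ.x ∧ ¬ inR R φ.y ∧ ψ = { φ with x := none }) ∨
      (¬ inR R φ.x ∧ inR R φ.y ∧ ψ = { φ with y := none }) }

/-- Instantaneous timed programs: guards (finite conjunctions of atomic constraints),
changes `[R]`, and sequential composition. -/
inductive Prog (C : Type*) where
  | guard : List (Atom C) → Prog C
  | change : Set C → Prog C
  | seq : Prog C → Prog C → Prog C

/-- Semantics `v →prog v'` of programs. -/
def Prog.steps (XF : Set C) : Prog C → Val C XF → Val C XF → Prop
  | .guard g, v, v' => (∀ φ ∈ g, asat v.toFun φ) ∧ v' = v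
  | .change R, v, v' => releaseRel XF R v v'
  | .seq p q, v, v' => ∃ u, Prog.steps XF p v u ∧ Prog.steps XF q u v'

/-- `pre(prog)(G)`. -/
def Prog.pre : Prog C → Set (Atom C) → Set (Atom C)
  | .guard g, G => { φ | φ ∈ g } ∪ G
  | .change R, G => preChange R G
  | .seq p q, G => Prog.pre p (Prog.pre q G)

/-- A weight `(◁, c)` with `c ∈ ℝ̄`. -/
structure Weight where
  cmp : Cmp
  c : EReal

/-- Strict order on weights. -/
def Weight.lt (w w' : Weight) : Prop :=
  w.c < w'.c ∨ (w.c = w'.c ∧ w.cmp = Cmp.lt ∧ w'.cmp = Cmp.le)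

/-- Non-strict order on weights. -/
def Weight.le (w w' : Weight) : Prop := Weight.lt w w' ∨ w = w'

/-- Sum of weights. -/
def Weight.add (w w' : Weight) : Weight :=
  if w = ⟨Cmp.lt, ⊥⟩ ∨ w' = ⟨Cmp.lt, ⊥⟩ then ⟨Cmp.lt, ⊥⟩
  else if w = ⟨Cmp.le, ⊤⟩ ∨ w' = ⟨Cmp.le, ⊤⟩ then ⟨Cmp.le, ⊤⟩
  else if w = ⟨Cmp.le, ⊥⟩ ∨ w' = ⟨Cmp.le, ⊥⟩ then ⟨Cmp.le, ⊥⟩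
  else if w = ⟨Cmp.lt, ⊤⟩ ∨ w' = ⟨Cmp.lt, ⊤⟩ then ⟨Cmp.lt, ⊤⟩
  else ⟨if w.cmp = Cmp.le ∧ w'.cmp = Cmp.le then Cmp.le else Cmp.lt, w.c + w'.c⟩

/-- Minimum of two weights. -/
def Weight.min (w w' : Weight) : Weight := if Weight.le w w' then w else w'

/-- A weight `(◁, c)` is finite if `c ∈ ℝ`. -/
def Weight.Finite (w : Weight) : Prop := w.c ≠ ⊥ ∧ w.c ≠ ⊤

/-- A distance graph: a weight on each ordered pair of distinct vertices of
`X ∪ {0}`; self-loops carry the trivial weight `(≤, +∞)`. -/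
structure DGraph (C : Type*) where
  w : Option C → Option C → Weight
  refl' : ∀ a : Option C, w a a = ⟨Cmp.le, ⊤⟩

namespace DGraph

/-- A well-formed distance graph has no edge of weight `(<, -∞)`. -/
def WF (G : DGraph C) : Prop := ∀ a b, G.w a b ≠ ⟨Cmp.lt, ⊥⟩

/-- The semantics `⟦𝔾⟧` of a distance graph. -/
def sem (G : DGraph C) (XF : Set C) : Set (Val C XF) :=
  { v | ∀ a b : Option C, (G.w a b).cmp.holds (esub (v.toFun b) (v.toFun a)) (G.w a b).c }

/-- Weight of the path `a₀ → a₁ → ⋯ → aₙ` given as the list `[a₀, …, aₙ]`. -/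
def chainWeight (G : DGraph C) : List (Option C) → Weight
  | a :: b :: l => Weight.add (G.w a b) (G.chainWeight (b :: l))
  | _ => ⟨Cmp.le, 0⟩

end DGraph

/-- `l` is a path from `a` to `b`: at least one edge, consecutive vertices distinct. -/
def IsPath (l : List (Option C)) (a b : Option C) : Prop :=
  2 ≤ l.length ∧ l.head? = some a ∧ l.getLast? = some b ∧ l.Chain' (· ≠ ·)

namespace DGraph

/-- `𝔾` has a negative cycle: a cycle of weight strictly less than `(≤, 0)`. -/
def HasNegCycle (G : DGraph C) : Prop :=
  ∃ (a : Option C) (l : List (Option C)),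
    IsPath l a a ∧ Weight.lt (G.chainWeight l) ⟨Cmp.le, 0⟩

/-- `𝔾` is in standard form. -/
def Standard (G : DGraph C) (XF : Set C) : Prop :=
  (∀ x ∈ XF, Weight.le (G.w none (some x)) ⟨Cmp.le, 0⟩) ∧
  (∀ x : C, x ∉ XF → Weight.le (G.w (some x) none) ⟨Cmp.le, 0⟩) ∧
  (∀ x y : C, G.w (some x) (some y) ≠ ⟨Cmp.le, ⊤⟩ →
    G.w (some x) none ≠ ⟨Cmp.le, ⊤⟩ ∧ G.w none (some y) ≠ ⟨Cmp.le, ⊤⟩)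

/-- `𝔾` is normalized: standard form, no negative cycle, and every edge weight is
minimal among the weights of paths between its endpoints. -/
def Normalized (G : DGraph C) (XF : Set C) : Prop :=
  G.Standard XF ∧ ¬ G.HasNegCycle ∧
  ∀ (a b : Option C) (l : List (Option C)), a ≠ b → IsPath l a b →
    Weight.le (G.w a b) (G.chainWeight l)

/-- Weight function of the standardization of `𝔾`. -/
def stdW (G : DGraph C) (XF : Set C) : Option C → Option C → Weight
  | none, some y =>
      if y ∈ XF then Weight.min (G.w none (some y)) ⟨Cmp.le, 0⟩
      else if ∃ a : Option C, a ≠ some y ∧ G.w a (some y) ≠ ⟨Cmp.le, ⊤⟩ then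
        Weight.min (G.w none (some y)) ⟨Cmp.lt, ⊤⟩
      else G.w none (some y)
  | some x, none =>
      if x ∈ XF then
        (if ∃ b : Option C, b ≠ some x ∧ G.w (some x) b ≠ ⟨Cmp.le, ⊤⟩ then
          Weight.min (G.w (some x) none) ⟨Cmp.lt, ⊤⟩
        else G.w (some x) none)
      else Weight.min (G.w (some x) none) ⟨Cmp.le, 0⟩
  | a, b => G.w a b

/-- The standardization of a distance graph. -/
def standardize (G : DGraph C) (XF : Set C) : DGraph C where
  w := G.stdW XF
  refl' := fun a => by
    cases a with
    | none => exact G.refl' none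
    | some x => exact G.refl' (some x)

/-- Intersecting a distance graph with a single atomic constraint `y - x ◁ c`:
the weight of the edge `x → y` is replaced by `min(𝔾_{xy}, (◁, c))`. -/
def addAtom (G : DGraph C) (φ : Atom C) : DGraph C where
  w := fun a b =>
    if a = φ.x ∧ b = φ.y ∧ φ.x ≠ φ.y then
      Weight.min (G.w a b) ⟨φ.cmp, φ.c.toEReal⟩
    else G.w a b
  refl' := fun a => by
    have h : ¬ (a = φ.x ∧ a = φ.y ∧ φ.x ≠ φ.y) := by
      rintro ⟨h1, h2, h3⟩
      exact h3 (h1 ▸ h2 ▸ rfl)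
    show (if a = φ.x ∧ a = φ.y ∧ φ.x ≠ φ.y then
      Weight.min (G.w a a) ⟨φ.cmp, φ.c.toEReal⟩ else G.w a a) = ⟨Cmp.le, ⊤⟩
    rw [if_neg h]
    exact G.refl' a

/-- Intersecting a distance graph with a guard (list of atomic constraints). -/
def guardGraph (G : DGraph C) : List (Atom C) → DGraph C
  | [] => G
  | φ :: g => (G.guardGraph g).addAtom φ

/-- Edgewise minimum of two distance graphs. -/
def minG (G H : DGraph C) : DGraph C where
  w := fun a b => Weight.min (G.w a b) (H.w a b)
  refl' := fun a => by
    show Weight.min (G.w a a) (H.w a a) = _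
    rw [G.refl', H.refl']
    exact ite_self _

end DGraph

/-- The distance graph `𝔾_v^G`. -/
def upGraph (XF : Set C) (G : Set (Atom C)) (v : Val C XF) : DGraph C where
  w := fun a b =>
    match a, b with
    | some x, none =>
        if x ∈ XF then ⟨Cmp.le, -(v.toFun (some x))⟩
        else if ∃ φ ∈ G, φ.y = none ∧ φ.x = some x ∧ φ.c ≠ EConst.ninf ∧ ¬ asat v.toFun φ
          then ⟨Cmp.le, -(v.toFun (some x))⟩
        else ⟨Cmp.le, ⊤⟩
    | none, some y =>
        if y ∈ XF then ⟨Cmp.le, v.toFun (some y)⟩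
        else if ∃ φ ∈ G, φ.y = some y ∧ φ.x = none ∧ φ.c ≠ EConst.pinf ∧ asat v.toFun φ
          then ⟨Cmp.le, v.toFun (some y)⟩
        else ⟨Cmp.le, ⊤⟩
    | _, _ => ⟨Cmp.le, ⊤⟩
  refl' := fun a => by cases a <;> rfl

/-- The guard `g_v^G`: all constraints of `G` satisfied by `v`. -/
def upGuard (G : Set (Atom C)) (u : Option C → EReal) : Set (Atom C) :=
  { φ ∈ G | asat u φ }

/-- An atomic constraint is `M`-bounded. -/
def MBounded (M : ℕ) (φ : Atom C) : Prop :=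
  (∃ k : ℤ, φ.c = EConst.int k ∧ -(M : ℤ) ≤ k ∧ k ≤ (M : ℤ)) ∨
  (φ.cmp = Cmp.le ∧ φ.c = EConst.ninf) ∨ φ.c = EConst.pinf

/-- An atomic constraint is `M`-bounded integral (constant in `{-∞,+∞} ∪ [-M, M] ∩ ℤ`). -/
def MBoundedIntegral (M : ℕ) (φ : Atom C) : Prop :=
  (∃ k : ℤ, φ.c = EConst.int k ∧ -(M : ℤ) ≤ k ∧ k ≤ (M : ℤ)) ∨
  φ.c = EConst.ninf ∨ φ.c = EConst.pinf

/-- An atomic constraint is `X_D`-safe: if both endpoints are future clocks,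
they are in `X_D`. -/
def XDSafe (XF XD : Set C) (φ : Atom C) : Prop :=
  ∀ x y : C, φ.x = some x → φ.y = some y → x ∈ XF → y ∈ XF → x ∈ XD ∧ y ∈ XD

/-- Vertices in `X_F ∪ {0}`. -/
def futV (XF : Set C) : Option C → Prop
  | none => True
  | some x => x ∈ XF

/-- Vertices in `X_H ∪ {0}`. -/
def histV (XF : Set C) : Option C → Prop
  | none => True
  | some x => x ∉ XF

/-- The equivalence `v₁ ≃ v₂`: agreement on history clocks and on all
`(X_D, M)`-safe constraints over `X_F ∪ {0}`. -/
def simeqV (XF XD : Set C) (M : ℕ) (v₁ v₂ : Val C XF) : Prop :=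
  (∀ x : C, x ∉ XF → v₁.toFun (some x) = v₂.toFun (some x)) ∧
  ∀ φ : Atom C, XDSafe XF XD φ → MBounded M φ → futV XF φ.x → futV XF φ.y →
    (asat v₁.toFun φ ↔ asat v₂.toFun φ)

/-- `(X_D, M)`-safely reachable zones: obtained from the initial zone
`↑(𝕍 ∧ g₀)` (`g₀` fixing each history clock to `0` or `+∞`) by the
`(X_D, M)`-safe zone operations. -/
inductive SafeReach (XF XD : Set C) (M : ℕ) : Set (Val C XF) → Prop where
  | init (f : C → EReal) (hf : ∀ x : C, x ∉ XF → f x = 0 ∨ f x = ⊤) :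
      SafeReach XF XD M (elapseSet XF { v | ∀ x : C, x ∉ XF → v.toFun (some x) = f x })
  | guard {Z : Set (Val C XF)} (g : Set (Atom C))
      (hg : ∀ φ ∈ g, XDSafe XF XD φ ∧ MBounded M φ)
      (h : SafeReach XF XD M Z) :
      SafeReach XF XD M { v ∈ Z | ∀ φ ∈ g, asat v.toFun φ }
  | changeSimple {Z : Set (Val C XF)} (x : C) (hx : x ∉ XD) (h : SafeReach XF XD M Z) :
      SafeReach XF XD M (changeSet XF {x} Z)
  | changeD {Z : Set (Val C XF)} (x : C) (hx : x ∈ XD) (c : EReal) (hc : c = 0 ∨ c = ⊥)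
      (h : SafeReach XF XD M Z) :
      SafeReach XF XD M (changeSet XF {x} { v ∈ Z | v.toFun (some x) = c })
  | elapse {Z : Set (Val C XF)} (h : SafeReach XF XD M Z) :
      SafeReach XF XD M (elapseSet XF Z)

/-- `α ∼_K β` on `ℝ̄`. -/
def eqvK (K : ℕ) (α β : EReal) : Prop :=
  ∀ (cmp : Cmp) (c : EReal),
    (c = ⊥ ∨ c = ⊤ ∨ ∃ k : ℤ, c = ((k : ℝ) : EReal) ∧ |k| ≤ (K : ℤ)) →
    (cmp.holds α c ↔ cmp.holds β c)

/-- The equivalence `v ∼ⁿ_M v'` on valuations. -/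
def simVn (XF : Set C) (M n : ℕ) (v v' : Val C XF) : Prop :=
  (∀ x : C, eqvK (n * M) (v.toFun (some x)) (v'.toFun (some x))) ∧
  ∀ x y : C, eqvK ((n + 1) * M)
    (esub (v.toFun (some x)) (v.toFun (some y)))
    (esub (v'.toFun (some x)) (v'.toFun (some y)))

/-- The `(†)` conditions for a distance graph with bound `B` (usually `B = nM`). -/
def Dagger (XF : Set C) (B : ℕ) (G : DGraph C) : Prop :=
  (∀ x ∈ XF, (∃ b : Option C, histV XF b ∧ (G.w (some x) b).Finite) →
     Weight.le ⟨Cmp.le, 0⟩ (G.w (some x) none) ∧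
     Weight.le (G.w (some x) none) ⟨Cmp.le, ((B : ℝ) : EReal)⟩) ∧
  (∀ x ∈ XF, (G.w none (some x)).Finite →
     Weight.le ⟨Cmp.lt, ((-(B : ℝ) : ℝ) : EReal)⟩ (G.w none (some x)) ∧
     Weight.le (G.w none (some x)) ⟨Cmp.le, 0⟩) ∧
  (∀ x : C, x ∉ XF → ∀ y ∈ XF, (G.w none (some y)).Finite →
     Weight.le (Weight.add (G.w (some x) none) ⟨Cmp.lt, ((-(B : ℝ) : ℝ) : EReal)⟩)
       (G.w (some x) (some y))) ∧
  (∀ x ∈ XF, ∀ y ∈ XF, (G.w (some x) (some y)).Finite →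
     Weight.le ⟨Cmp.lt, ((-(B : ℝ) : ℝ) : EReal)⟩ (G.w (some x) (some y)) ∧
     Weight.le (G.w (some x) (some y)) ⟨Cmp.le, ((B : ℝ) : EReal)⟩)

end GTA

namespace GTA

section Aux

variable {C : Type*} {XF : Set C}

lemma eadd_coe (a : EReal) (d : ℝ) : eadd a (d : EReal) = a + d := by
  unfold eadd
  split_ifs with h
  · rcases h with h | h
    · rw [h, EReal.top_add_coe]
    · exact absurd h (EReal.coe_ne_top d)
  · rfl

lemma esub_zero (a : EReal) : esub a 0 = a := by
  unfold esub
  rw [neg_zero, show (0:EReal) = ((0:ℝ):EReal) by norm_cast, eadd_coe]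
  simp

lemma esub_zero_left (a : EReal) : esub 0 a = -a := by
  unfold esub eadd
  split_ifs with h
  · rcases h with h | h
    · exact absurd h (by norm_num)
    · rw [h]
  · rw [zero_add]

lemma esub_add_coe (a b : EReal) (d : ℝ) : esub (a + d) (b + d) = esub a b := by
  unfold esub eadd
  induction a using EReal.rec with
  | top => simp [EReal.top_add_coe]
  | bot =>
    rw [EReal.bot_add]
    induction b using EReal.rec with
    | top => simp [EReal.top_add_coe]
    | bot => simp [EReal.bot_add]
    | coe b => simp [← EReal.coe_add, ← EReal.coe_neg, EReal.bot_add]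
  | coe a =>
    induction b using EReal.rec with
    | top => simp [EReal.top_add_coe, ← EReal.coe_add]
    | bot => simp [EReal.bot_add, ← EReal.coe_add]
    | coe b =>
      simp only [← EReal.coe_add, ← EReal.coe_neg, EReal.coe_ne_top, or_self, if_false]
      norm_cast
      ring

lemma ereal_cases (a : EReal) : a = ⊥ ∨ a = ⊤ ∨ ∃ r : ℝ, a = (r : EReal) := by
  induction a using EReal.rec with
  | bot => exact Or.inl rfl
  | top => exact Or.inr (Or.inl rfl)
  | coe r => exact Or.inr (Or.inr ⟨r, rfl⟩)

lemma holds_mono {cmp : Cmp} {a b c : EReal} (hab : a ≤ b) (h : cmp.holds b c) :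
    cmp.holds a c := by
  cases cmp
  · exact lt_of_le_of_lt hab h
  · exact le_trans hab h

lemma shift_some (u : Option C → EReal) (δ : ℝ) (x : C) :
    shift u δ (some x) = u (some x) + δ := eadd_coe _ _

lemma shift_none (u : Option C → EReal) (δ : ℝ) : shift u δ none = 0 := rfl

lemma asat_shift_some_some (u : Option C → EReal) (δ : ℝ) (φ : Atom C) (x y : C)
    (hx : φ.x = some x) (hy : φ.y = some y) : asat (shift u δ) φ ↔ asat u φ := by
  unfold asat
  rw [hx, hy, shift_some, shift_some, esub_add_coe]

lemma asat_shift_zero (v : Val C XF) (φ : Atom C) :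
    asat (shift v.toFun 0) φ ↔ asat v.toFun φ := by
  have h : shift v.toFun (0:ℝ) = v.toFun := by
    funext a
    cases a with
    | none => rw [shift_none, v.zero']
    | some x => rw [shift_some]; norm_num
  rw [h]

/-- Future clocks are preserved by simulation. -/
lemma fut_eq_of_simLe {G : Set (Atom C)}
    (hG : ∀ x ∈ XF, (⟨some x, none, Cmp.le, EConst.int 0⟩ : Atom C) ∈ G ∧
      (⟨none, some x, Cmp.le, EConst.int 0⟩ : Atom C) ∈ G)
    {v v' : Val C XF} (h : simLe XF G v v') {x : C} (hx : x ∈ XF) :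
    v'.toFun (some x) = v.toFun (some x) := by
  have ha : v.toFun (some x) ≤ 0 := v.fut' x hx
  have ha' : v'.toFun (some x) ≤ 0 := v'.fut' x hx
  have h1 : ∀ δ : ℝ, 0 ≤ δ → v.toFun (some x) + δ ≤ 0 → v'.toFun (some x) + δ ≤ 0 := by
    intro δ hδ hs
    have := h _ (hG x hx).1 δ hδ
    unfold asat at this
    simp only [shift_some, shift_none, esub_zero] at this
    have h0 : (EConst.int 0).toEReal = (0 : EReal) := by
      simp [EConst.toEReal]
    rw [h0] at this
    exact this hs
  have h2 : ∀ δ : ℝ, 0 ≤ δ → -(v.toFun (some x) + δ) ≤ 0 → -(v'.toFun (some x) + δ) ≤ 0 := by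
    intro δ hδ hs
    have := h _ (hG x hx).2 δ hδ
    unfold asat at this
    simp only [shift_some, shift_none, esub_zero_left] at this
    have h0 : (EConst.int 0).toEReal = (0 : EReal) := by
      simp [EConst.toEReal]
    rw [h0] at this
    exact this hs
  rcases ereal_cases (v.toFun (some x)) with hv | hv | ⟨r, hv⟩
  · -- v(x) = ⊥ : show v'(x) = ⊥
    rcases ereal_cases (v'.toFun (some x)) with hv' | hv' | ⟨s, hv'⟩
    · rw [hv, hv']
    · rw [hv'] at ha'; exact absurd ha' (by simp)
    · exfalso
      have hs0 : s ≤ 0 := by rw [hv'] at ha'; exact_mod_cast ha'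
      have := h1 (1 - s) (by linarith) (by rw [hv, EReal.bot_add]; exact bot_le)
      rw [hv', ← EReal.coe_add] at this
      have : s + (1 - s) ≤ 0 := by exact_mod_cast this
      linarith
  · rw [hv] at ha; exact absurd ha (by simp)
  · have hr0 : r ≤ 0 := by rw [hv] at ha; exact_mod_cast ha
    have hup := h1 (-r) (by linarith) (by rw [hv, ← EReal.coe_add]; norm_num)
    have hdn := h2 (-r) (by linarith) (by rw [hv, ← EReal.coe_add]; norm_num)
    rcases ereal_cases (v'.toFun (some x)) with hv' | hv' | ⟨s, hv'⟩
    · exfalso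
      rw [hv', EReal.bot_add, EReal.neg_bot] at hdn
      exact absurd hdn (by simp)
    · rw [hv'] at ha'; exact absurd ha' (by simp)
    · rw [hv', ← EReal.coe_add] at hup hdn
      rw [← EReal.coe_neg] at hdn
      have hup' : s + -r ≤ 0 := by exact_mod_cast hup
      have hdn' : -(s + -r) ≤ 0 := by exact_mod_cast hdn
      rw [hv', hv]
      congr 1
      linarith

lemma hist_upper {G : Set (Atom C)} {v v' : Val C XF} (h : simLe XF G v v')
    {y : C} (hy : y ∉ XF) (φ : Atom C) (hφG : φ ∈ G) (hφy : φ.y = some y)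
    (hφx : φ.x = none) (hφc : φ.c ≠ EConst.pinf) (hsat : asat v.toFun φ) :
    v'.toFun (some y) ≤ v.toFun (some y) := by
  have hb : (0:EReal) ≤ v.toFun (some y) := v.hist' y hy
  unfold asat at hsat
  rw [hφy, hφx, v.zero', esub_zero] at hsat
  have hsim : ∀ δ : ℝ, 0 ≤ δ →
      φ.cmp.holds (v.toFun (some y) + δ) φ.c.toEReal →
      φ.cmp.holds (v'.toFun (some y) + δ) φ.c.toEReal := by
    intro δ hδ hs
    have hh := h φ hφG δ hδ
    unfold asat at hh
    rw [hφy, hφx] at hh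
    simp only [shift_some, shift_none, esub_zero] at hh
    exact hh hs
  rcases hc : φ.c with _ | k | _
  · -- ninf
    rw [hc] at hsat
    cases hcmp : φ.cmp <;> rw [hcmp] at hsat <;>
      simp only [Cmp.holds, EConst.toEReal] at hsat
    · exact absurd hsat (by simp)
    · rw [le_bot_iff] at hsat
      rw [hsat] at hb
      exact absurd hb (by simp)
  · -- int k
    rw [hc] at hsat hsim
    simp only [EConst.toEReal] at hsat hsim
    rcases ereal_cases (v.toFun (some y)) with hv | hv | ⟨r, hv⟩
    · rw [hv] at hb; exact absurd hb (by simp)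
    · exfalso
      rw [hv] at hsat
      cases hcmp : φ.cmp <;> rw [hcmp] at hsat <;>
        simp only [Cmp.holds] at hsat
      · exact absurd hsat (by simp)
      · exact absurd hsat (by simp [top_le_iff])
    · rw [hv] at hsat hsim ⊢
      cases hcmp : φ.cmp <;> rw [hcmp] at hsat hsim <;>
        simp only [Cmp.holds] at hsat hsim
      · -- lt
        have hrk : r < (k:ℝ) := by exact_mod_cast hsat
        by_contra hcon
        push_neg at hcon
        obtain ⟨t, hrt, htb⟩ := EReal.exists_between_coe_real hcon
        have hrt'' : r < t := by exact_mod_cast hrt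
        have hrt' : r < min t (k:ℝ) := lt_min hrt'' hrk
        have hδ : (0:ℝ) ≤ (k:ℝ) - min t (k:ℝ) := by
          have := min_le_right t (k:ℝ); linarith
        have hs1 : ((r:EReal) + (((k:ℝ) - min t (k:ℝ) : ℝ):EReal)) < (((k:ℝ)):EReal) := by
          rw [← EReal.coe_add]
          exact_mod_cast (by linarith : r + ((k:ℝ) - min t (k:ℝ)) < (k:ℝ))
        have hs2 := hsim _ hδ hs1
        have h1 : ((min t (k:ℝ) : ℝ):EReal) ≤ v'.toFun (some y) := by
          refine le_trans ?_ htb.le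
          exact_mod_cast min_le_left t (k:ℝ)
        have hge : (((k:ℝ)):EReal) ≤ v'.toFun (some y) + (((k:ℝ) - min t (k:ℝ) : ℝ):EReal) := by
          calc (((k:ℝ)):EReal)
              = ((min t (k:ℝ) : ℝ):EReal) + (((k:ℝ) - min t (k:ℝ) : ℝ):EReal) := by
                rw [← EReal.coe_add]; norm_cast; ring
            _ ≤ _ := add_le_add_left h1 _
        exact absurd (lt_of_le_of_lt hge hs2) (by simp)
      · -- le
        have hrk : r ≤ (k:ℝ) := by exact_mod_cast hsat
        have hδ : (0:ℝ) ≤ (k:ℝ) - r := by linarith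
        have hs1 : ((r:EReal) + (((k:ℝ) - r : ℝ):EReal)) ≤ (((k:ℝ)):EReal) := by
          rw [← EReal.coe_add]
          exact_mod_cast (by linarith : r + ((k:ℝ) - r) ≤ (k:ℝ))
        have hs2 := hsim _ hδ hs1
        rcases ereal_cases (v'.toFun (some y)) with hv' | hv' | ⟨s, hv'⟩
        · rw [hv']; exact bot_le
        · exfalso
          rw [hv', EReal.top_add_coe] at hs2
          exact absurd hs2 (by simp [top_le_iff])
        · rw [hv'] at hs2 ⊢
          rw [← EReal.coe_add] at hs2
          have hss : s + ((k:ℝ) - r) ≤ (k:ℝ) := by exact_mod_cast hs2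
          exact_mod_cast (by linarith : s ≤ r)
  · exact absurd hc hφc

lemma hist_lower {G : Set (Atom C)} {v v' : Val C XF} (h : simLe XF G v v')
    {y : C} (hy : y ∉ XF) (φ : Atom C) (hφG : φ ∈ G) (hφy : φ.y = none)
    (hφx : φ.x = some y) (hφc : φ.c ≠ EConst.ninf) (hsat : ¬ asat v.toFun φ) :
    v.toFun (some y) ≤ v'.toFun (some y) := by
  have hb : (0:EReal) ≤ v.toFun (some y) := v.hist' y hy
  have hb' : (0:EReal) ≤ v'.toFun (some y) := v'.hist' y hy
  unfold asat at hsat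
  rw [hφy, hφx, v.zero', esub_zero_left] at hsat
  have hsim : ∀ δ : ℝ, 0 ≤ δ →
      φ.cmp.holds (-(v.toFun (some y) + δ)) φ.c.toEReal →
      φ.cmp.holds (-(v'.toFun (some y) + δ)) φ.c.toEReal := by
    intro δ hδ hs
    have hh := h φ hφG δ hδ
    unfold asat at hh
    rw [hφy, hφx] at hh
    simp only [shift_some, shift_none, esub_zero_left] at hh
    exact hh hs
  rcases hc : φ.c with _ | k | _
  · exact absurd hc hφc
  · -- int k
    rw [hc] at hsat hsim
    simp only [EConst.toEReal] at hsat hsim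
    rcases ereal_cases (v.toFun (some y)) with hv | hv | ⟨r, hv⟩
    · rw [hv] at hb; exact absurd hb (by simp)
    · exfalso
      rw [hv, EReal.neg_top] at hsat
      cases hcmp : φ.cmp <;> rw [hcmp] at hsat <;> simp only [Cmp.holds] at hsat
      · exact hsat (EReal.bot_lt_coe _)
      · exact hsat bot_le
    · rw [hv] at hsat hsim ⊢
      cases hcmp : φ.cmp <;> rw [hcmp] at hsat hsim <;>
        simp only [Cmp.holds] at hsat hsim
      · -- lt : ¬(-r < k) i.e. k ≤ -r
        have hkr : (k:ℝ) ≤ -r := by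
          by_contra hcc
          push_neg at hcc
          exact hsat (by rw [← EReal.coe_neg]; exact_mod_cast hcc)
        by_contra hcon
        push_neg at hcon
        obtain ⟨t, htb, htr⟩ := EReal.exists_between_coe_real hcon
        have htr' : t < r := by exact_mod_cast htr
        have hδ : (0:ℝ) ≤ -(k:ℝ) - t := by linarith
        have hs1 : -((r:EReal) + ((-(k:ℝ) - t : ℝ):EReal)) < (((k:ℝ)):EReal) := by
          rw [← EReal.coe_add, ← EReal.coe_neg]
          exact_mod_cast (by linarith : -(r + (-(k:ℝ) - t)) < (k:ℝ))
        have hs2 := hsim _ hδ hs1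
        rcases ereal_cases (v'.toFun (some y)) with hv' | hv' | ⟨s, hv'⟩
        · rw [hv'] at hb'; exact absurd hb' (by simp)
        · rw [hv'] at htb; exact absurd htb (by simp)
        · rw [hv'] at hs2 htb
          rw [← EReal.coe_add, ← EReal.coe_neg] at hs2
          have h1 : -(s + (-(k:ℝ) - t)) < (k:ℝ) := by exact_mod_cast hs2
          have h2 : s < t := by exact_mod_cast htb
          linarith
      · -- le : ¬(-r ≤ k) i.e. k < -r
        have hkr : (k:ℝ) < -r := by
          by_contra hcc
          push_neg at hcc
          exact hsat (by rw [← EReal.coe_neg]; exact_mod_cast hcc)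
        have hδ : (0:ℝ) ≤ -(k:ℝ) - r := by linarith
        have hs1 : -((r:EReal) + ((-(k:ℝ) - r : ℝ):EReal)) ≤ (((k:ℝ)):EReal) := by
          rw [← EReal.coe_add, ← EReal.coe_neg]
          exact_mod_cast (by linarith : -(r + (-(k:ℝ) - r)) ≤ (k:ℝ))
        have hs2 := hsim _ hδ hs1
        rcases ereal_cases (v'.toFun (some y)) with hv' | hv' | ⟨s, hv'⟩
        · rw [hv'] at hb'; exact absurd hb' (by simp)
        · rw [hv']; exact le_top
        · rw [hv'] at hs2 ⊢
          rw [← EReal.coe_add, ← EReal.coe_neg] at hs2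
          have h1 : -(s + (-(k:ℝ) - r)) ≤ (k:ℝ) := by exact_mod_cast hs2
          exact_mod_cast (by linarith : r ≤ s)
  · -- pinf : asat v φ always holds, contradiction
    exfalso
    rw [hc] at hsat
    cases hcmp : φ.cmp <;> rw [hcmp] at hsat <;>
      simp only [Cmp.holds, EConst.toEReal] at hsat
    · rw [lt_top_iff_ne_top] at hsat
      push_neg at hsat
      have hvb : v.toFun (some y) = ⊥ := by
        rcases ereal_cases (v.toFun (some y)) with hv | hv | ⟨r, hv⟩
        · exact hv
        · rw [hv, EReal.neg_top] at hsat; exact absurd hsat (by simp)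
        · rw [hv, ← EReal.coe_neg] at hsat
          exact absurd hsat (EReal.coe_ne_top _)
      rw [hvb] at hb
      exact absurd hb (by simp)
    · exact hsat le_top

lemma upGraph_none_none {G : Set (Atom C)} {v : Val C XF} :
    (upGraph XF G v).w none none = ⟨Cmp.le, ⊤⟩ := rfl

lemma upGraph_some_some {G : Set (Atom C)} {v : Val C XF} (x y : C) :
    (upGraph XF G v).w (some x) (some y) = ⟨Cmp.le, ⊤⟩ := rfl

lemma upGraph_some_none {G : Set (Atom C)} {v : Val C XF} (x : C) :
    (upGraph XF G v).w (some x) none =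
      if x ∈ XF then ⟨Cmp.le, -(v.toFun (some x))⟩
      else if ∃ φ ∈ G, φ.y = none ∧ φ.x = some x ∧ φ.c ≠ EConst.ninf ∧ ¬ asat v.toFun φ
        then ⟨Cmp.le, -(v.toFun (some x))⟩
      else ⟨Cmp.le, ⊤⟩ := rfl

lemma upGraph_none_some {G : Set (Atom C)} {v : Val C XF} (y : C) :
    (upGraph XF G v).w none (some y) =
      if y ∈ XF then ⟨Cmp.le, v.toFun (some y)⟩
      else if ∃ φ ∈ G, φ.y = some y ∧ φ.x = none ∧ φ.c ≠ EConst.pinf ∧ asat v.toFun φ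
        then ⟨Cmp.le, v.toFun (some y)⟩
      else ⟨Cmp.le, ⊤⟩ := rfl

end Aux

end GTA

namespace GTA

/-- `↑_G v = ⟦𝔾_v^G⟧ ∩ {v' : v' ⊨ g_v^G}` provided `G` contains
`x - 0 ≤ 0` and `0 - x ≤ 0` for every future clock `x`. -/
theorem upset_characterization {C : Type*} [Finite C] (XF : Set C) (G : Set (Atom C))
    (hG : ∀ x ∈ XF, (⟨some x, none, Cmp.le, EConst.int 0⟩ : Atom C) ∈ G ∧
      (⟨none, some x, Cmp.le, EConst.int 0⟩ : Atom C) ∈ G)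
    (v : Val C XF) :
    { v' : Val C XF | simLe XF G v v' } =
      (upGraph XF G v).sem XF ∩
        { v' : Val C XF | ∀ φ ∈ upGuard G v.toFun, asat v'.toFun φ } := by
  ext v'
  simp only [Set.mem_setOf_eq, Set.mem_inter_iff]
  constructor
  · -- forward
    intro hsim
    constructor
    · -- v' ∈ sem
      intro a b
      cases a with
      | none =>
        cases b with
        | none =>
          rw [upGraph_none_none]
          exact le_top
        | some y =>
          rw [upGraph_none_some]
          split_ifs with h1 h2
          · show esub (v'.toFun (some y)) (v'.toFun none) ≤ v.toFun (some y)
            rw [v'.zero', esub_zero, fut_eq_of_simLe hG hsim h1]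
          · show esub (v'.toFun (some y)) (v'.toFun none) ≤ v.toFun (some y)
            rw [v'.zero', esub_zero]
            obtain ⟨φ, hφG, hy, hx, hc, hs⟩ := h2
            exact hist_upper hsim h1 φ hφG hy hx hc hs
          · exact le_top
      | some x =>
        cases b with
        | none =>
          rw [upGraph_some_none]
          split_ifs with h1 h2
          · show esub (v'.toFun none) (v'.toFun (some x)) ≤ -(v.toFun (some x))
            rw [v'.zero', esub_zero_left, fut_eq_of_simLe hG hsim h1]
          · show esub (v'.toFun none) (v'.toFun (some x)) ≤ -(v.toFun (some x))
            rw [v'.zero', esub_zero_left]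
            obtain ⟨φ, hφG, hy, hx, hc, hs⟩ := h2
            exact EReal.neg_le_neg_iff.mpr (hist_lower hsim h1 φ hφG hy hx hc hs)
          · exact le_top
        | some y =>
          rw [upGraph_some_some]
          exact le_top
    · -- guard
      intro φ hφ
      obtain ⟨hφG, hsat⟩ := hφ
      have hh := hsim φ hφG 0 le_rfl
      rw [asat_shift_zero, asat_shift_zero] at hh
      exact hh hsat
  · -- backward
    rintro ⟨hsem, hgd⟩
    have hfut : ∀ x ∈ XF, v'.toFun (some x) = v.toFun (some x) := by
      intro x hx
      have h1 := hsem none (some x)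
      have h2 := hsem (some x) none
      rw [upGraph_none_some, if_pos hx] at h1
      rw [upGraph_some_none, if_pos hx] at h2
      replace h1 : esub (v'.toFun (some x)) (v'.toFun none) ≤ v.toFun (some x) := h1
      replace h2 : esub (v'.toFun none) (v'.toFun (some x)) ≤ -(v.toFun (some x)) := h2
      rw [v'.zero', esub_zero] at h1
      rw [v'.zero', esub_zero_left] at h2
      exact le_antisymm h1 (EReal.neg_le_neg_iff.mp h2)
    intro φ hφG δ hδ hsat
    have hδ' : (0:EReal) ≤ ((δ:ℝ):EReal) := by exact_mod_cast hδ
    obtain ⟨fy, fx, cmp, c⟩ := φ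
    cases fy with
    | none =>
      cases fx with
      | none =>
        unfold asat at hsat ⊢
        exact hsat
      | some x =>
        unfold asat at hsat ⊢
        simp only [shift_some, shift_none, esub_zero_left] at hsat ⊢
        by_cases hx : x ∈ XF
        · rw [hfut x hx]
          exact hsat
        · have hbx' : (0:EReal) ≤ v'.toFun (some x) := v'.hist' x hx
          rcases hc : c with _ | k | _
          · -- ninf
            subst hc
            cases cmp
            · exact absurd hsat (by simp [Cmp.holds, EConst.toEReal])
            · -- le : -(v x + δ) ≤ ⊥
              replace hsat : -(v.toFun (some x) + (δ:EReal)) ≤ (⊥:EReal) := hsat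
              rw [le_bot_iff] at hsat
              have hvx : v.toFun (some x) = ⊤ := by
                rcases ereal_cases (v.toFun (some x)) with hv | hv | ⟨r, hv⟩
                · rw [hv] at hsat
                  rw [EReal.bot_add, EReal.neg_bot] at hsat
                  exact absurd hsat (by simp)
                · exact hv
                · rw [hv, ← EReal.coe_add, ← EReal.coe_neg] at hsat
                  exact absurd hsat (EReal.coe_ne_bot _)
              have hvs : asat v.toFun ⟨none, some x, Cmp.le, EConst.ninf⟩ := by
                unfold asat
                rw [v.zero', esub_zero_left]
                show -(v.toFun (some x)) ≤ (⊥:EReal)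
                rw [hvx, EReal.neg_top]
              have hv' := hgd _ ⟨hφG, hvs⟩
              unfold asat at hv'
              rw [v'.zero', esub_zero_left] at hv'
              replace hv' : -(v'.toFun (some x)) ≤ (⊥:EReal) := hv'
              rw [le_bot_iff] at hv'
              have hvx' : v'.toFun (some x) = ⊤ := by
                rcases ereal_cases (v'.toFun (some x)) with hv | hv | ⟨r, hv⟩
                · rw [hv] at hbx'; exact absurd hbx' (by simp)
                · exact hv
                · rw [hv, ← EReal.coe_neg] at hv'
                  exact absurd hv' (EReal.coe_ne_bot _)
              show -(v'.toFun (some x) + (δ:EReal)) ≤ (⊥:EReal)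
              rw [hvx', EReal.top_add_coe, EReal.neg_top]
          · -- int k
            subst hc
            by_cases hvs : asat v.toFun ⟨none, some x, cmp, EConst.int k⟩
            · have hv' := hgd _ ⟨hφG, hvs⟩
              unfold asat at hv'
              rw [v'.zero', esub_zero_left] at hv'
              refine holds_mono ?_ hv'
              exact EReal.neg_le_neg_iff.mpr (le_add_of_nonneg_right hδ')
            · have hedge := hsem (some x) none
              rw [upGraph_some_none, if_neg hx,
                if_pos ⟨⟨none, some x, cmp, EConst.int k⟩, hφG, rfl, rfl, by simp, hvs⟩] at hedge
              replace hedge : esub (v'.toFun none) (v'.toFun (some x)) ≤ -(v.toFun (some x)) :=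
                hedge
              rw [v'.zero', esub_zero_left] at hedge
              have hle := EReal.neg_le_neg_iff.mp hedge
              refine holds_mono ?_ hsat
              exact EReal.neg_le_neg_iff.mpr (add_le_add_left hle _)
          · -- pinf
            subst hc
            cases cmp
            · show -(v'.toFun (some x) + (δ:EReal)) < (⊤:EReal)
              rw [lt_top_iff_ne_top]
              intro hcon
              have : v'.toFun (some x) + (δ:EReal) = ⊥ := by
                rcases ereal_cases (v'.toFun (some x) + (δ:EReal)) with hv | hv | ⟨r, hv⟩
                · exact hv
                · rw [hv, EReal.neg_top] at hcon; exact absurd hcon (by simp)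
                · rw [hv, ← EReal.coe_neg] at hcon
                  exact absurd hcon (EReal.coe_ne_top _)
              rw [EReal.add_eq_bot_iff] at this
              rcases this with hv | hv
              · rw [hv] at hbx'; exact absurd hbx' (by simp)
              · exact EReal.coe_ne_bot _ hv
            · exact le_top
    | some y =>
      cases fx with
      | some x =>
        rw [asat_shift_some_some v'.toFun δ _ x y rfl rfl]
        rw [asat_shift_some_some v.toFun δ _ x y rfl rfl] at hsat
        exact hgd _ ⟨hφG, hsat⟩
      | none =>
        unfold asat at hsat ⊢
        simp only [shift_some, shift_none, esub_zero] at hsat ⊢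
        by_cases hy : y ∈ XF
        · rw [hfut y hy]
          exact hsat
        · have hby : (0:EReal) ≤ v.toFun (some y) := v.hist' y hy
          rcases hc : c with _ | k | _
          · -- ninf
            subst hc
            cases cmp
            · exact absurd hsat (by simp [Cmp.holds, EConst.toEReal])
            · exfalso
              replace hsat : v.toFun (some y) + (δ:EReal) ≤ (⊥:EReal) := hsat
              rw [le_bot_iff, EReal.add_eq_bot_iff] at hsat
              rcases hsat with hv | hv
              · rw [hv] at hby; exact absurd hby (by simp)
              · exact EReal.coe_ne_bot _ hv
          · -- int k
            subst hc
            have hvs : asat v.toFun ⟨some y, none, cmp, EConst.int k⟩ := by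
              unfold asat
              rw [v.zero', esub_zero]
              exact holds_mono (le_add_of_nonneg_right hδ') hsat
            have hedge := hsem none (some y)
            rw [upGraph_none_some, if_neg hy,
              if_pos ⟨⟨some y, none, cmp, EConst.int k⟩, hφG, rfl, rfl, by simp, hvs⟩] at hedge
            replace hedge : esub (v'.toFun (some y)) (v'.toFun none) ≤ v.toFun (some y) := hedge
            rw [v'.zero', esub_zero] at hedge
            exact holds_mono (add_le_add_left hedge _) hsat
          · -- pinf
            subst hc
            cases cmp
            · -- lt
              replace hsat : v.toFun (some y) + (δ:EReal) < (⊤:EReal) := hsat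
              have hvy : v.toFun (some y) ≠ ⊤ := by
                intro hcon
                rw [hcon, EReal.top_add_coe] at hsat
                exact absurd hsat (by simp)
              have hvs : asat v.toFun ⟨some y, none, Cmp.lt, EConst.pinf⟩ := by
                unfold asat
                rw [v.zero', esub_zero]
                exact lt_top_iff_ne_top.mpr hvy
              have hv' := hgd _ ⟨hφG, hvs⟩
              unfold asat at hv'
              rw [v'.zero', esub_zero] at hv'
              replace hv' : v'.toFun (some y) < (⊤:EReal) := hv'
              show v'.toFun (some y) + (δ:EReal) < (⊤:EReal)
              exact EReal.add_lt_top (lt_top_iff_ne_top.mp hv') (EReal.coe_ne_top δ)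
            · exact le_top

end GTA
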